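/- Let $\Omega$ be a real symmetric $n\times n$ matrix with nonnegative entries and zero diagonal, $Q_i = I + D_i\Omega$, and $h(v) = \frac12 v^T \Omega v$. Then for every $v \in \mathbb{R}^n$ and every $i$, $h(Q_i v) - h(v) = \|Q_i v - v\|^2$, where $\|\cdot\|$ is the Euclidean norm. -/

import Mathlib

open Matrix

theorem stmt13 {n : ℕ} (Ω : Matrix (Fin n) (Fin n) ℝ) (hsymm : Ω.IsSymm)
    (hnn : ∀ a b, 0 ≤ Ω a b) (hdiag : ∀ i, Ω i i = 0)
    (i : Fin n) (v : Fin n → ℝ) :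
    let Q := (1 : Matrix (Fin n) (Fin n) ℝ) + Matrix.single i i 1 * Ω
    (1 / 2) * (Q.mulVec v ⬝ᵥ Ω.mulVec (Q.mulVec v)) - (1 / 2) * (v ⬝ᵥ Ω.mulVec v)
      = (Q.mulVec v - v) ⬝ᵥ (Q.mulVec v - v) := by
  intro Q
  set c : ℝ := Ω.mulVec v i with hc
  have hw : Q.mulVec v - v = Pi.single i c := by
    funext j
    simp only [Q, add_mulVec, one_mulVec, Pi.sub_apply, Pi.add_apply, add_sub_cancel_left,
      ← mulVec_mulVec, mulVec, dotProduct, single, of_apply]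
    by_cases h : j = i
    · subst h
      simp [hc, mulVec, dotProduct]
    · simp [Pi.single_apply, h, Ne.symm h]
  have hQ : Q.mulVec v = v + Pi.single i c := by
    rw [← hw]; ring_nf
  have hsym : ∀ x y : Fin n → ℝ, x ⬝ᵥ Ω.mulVec y = y ⬝ᵥ Ω.mulVec x := by
    intro x y
    rw [dotProduct_mulVec, ← hsymm.eq, vecMul_transpose, dotProduct_comm, hsymm.eq]
  rw [hw, hQ]
  simp only [mulVec_add, dotProduct_add, add_dotProduct]
  rw [hsym (Pi.single i c) v]
  simp only [single_dotProduct, dotProduct_single, mulVec_single, Pi.single_apply]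
  have hcol : (v ⬝ᵥ fun j => Ω j i * c) = c * c := by
    have h1 : (v ⬝ᵥ fun j => Ω j i * c) = (∑ j, Ω i j * v j) * c := by
      simp only [dotProduct, Finset.sum_mul]
      apply Finset.sum_congr rfl
      intro j _
      rw [hsymm.apply]
      ring
    rw [h1, hc]
    simp [mulVec, dotProduct]
  simp only [show (MulOpposite.op c • Ω.col i) = fun j => Ω j i * c from by funext j; simp [Matrix.col], hcol, hdiag i]
  simp
  ring
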